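/- The operator L_1 := Σ_{α=1}^{n} Σ_{p≥0} (p + 1/2 + μ_α)(p + 3/2 + μ_α)·T^{α,p}∘∂_{α,p+1} + (1/2)·Σ_{α,β=1}^{n} η^{αβ}·(1/2 + μ_α)(1/2 + μ_β)·∂_{α,0}∘∂_{β,0} equals V_1 as a linear operator on P. (This is the case j = 1 of the coincidence of the Virasoro operators of the Frobenius manifold of the Coxeter group D_n, expressed in the rescaled time variables, with the operators V_j obtained from vertex operators of the two-component BKP hierarchy.) -/

import Mathlib

open MvPolynomial

noncomputable section

/-- The polynomial algebra over ℚ in variables `t_{2m+1}` (index `(false, m)`) and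
`t̂_{2m+1}` (index `(true, m)`). -/
abbrev PP : Type := MvPolynomial (Bool × ℕ) ℚ

/-- The operator `p_k` (for `b = false`) resp. `p̂_k` (for `b = true`):
`2·∂/∂t_k` for odd positive `k`, multiplication by `(-k)·t_{-k}` for odd negative `k`,
and `0` for even `k`. -/
def pOp (b : Bool) (k : ℤ) : PP → PP := fun q =>
  if 0 < k ∧ Odd k then (2 : ℚ) • pderiv (b, (k.toNat - 1) / 2) q
  else if k < 0 ∧ Odd k then ((-k : ℤ) : ℚ) • (X (b, ((-k).toNat - 1) / 2) * q)
  else 0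

/-- The normal-ordered product `:p_a p_c:`, equal to `p_c ∘ p_a` if `a > 0 > c`
and `p_a ∘ p_c` otherwise. -/
def nord (b : Bool) (a c : ℤ) : PP → PP :=
  if 0 < a ∧ c < 0 then fun q => pOp b c (pOp b a q) else fun q => pOp b a (pOp b c q)

/-- The Virasoro operator
`V_j = (1/(8n-8))·Σ_{i∈ℤ} :p_i p_{(2n-2)j-i}: + (1/8)·Σ_{i∈ℤ} :p̂_i p̂_{2j-i}:
+ δ_{j,0}·(n/24)·(1 + 1/(2n-2))·Id`, acting pointwise (on each polynomial only finitely
many summands act nontrivially). -/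
def Vop (n : ℕ) (j : ℤ) : PP → PP := fun q =>
  (8 * (n : ℚ) - 8)⁻¹ • (∑ᶠ i : ℤ, nord false i ((2 * (n : ℤ) - 2) * j - i) q)
  + (8 : ℚ)⁻¹ • (∑ᶠ i : ℤ, nord true i (2 * j - i) q)
  + (if j = 0 then (n : ℚ) / 24 * (1 + (2 * (n : ℚ) - 2)⁻¹) else 0) • q

/-- For `α ∈ {1,…,n}`, the spectrum `μ_α = (2α-n)/(2n-2)` for `α ≤ n-1` and `μ_n = 0`. -/
def mu (n α : ℕ) : ℚ :=
  if α = n then 0 else (2 * (α : ℚ) - n) / (2 * (n : ℚ) - 2)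

/-- The rescaling constants: `c_{α,p} = (2n-2)·∏_{r=0}^{p}((2α-1)/(2n-2)+r)` for
`α ≤ n-1` and `c_{n,p} = 2·∏_{r=0}^{p}(1/2+r)`. -/
def cc (n α p : ℕ) : ℚ :=
  if α = n then 2 * ∏ r ∈ Finset.range (p + 1), ((1 : ℚ) / 2 + r)
  else (2 * (n : ℚ) - 2) * ∏ r ∈ Finset.range (p + 1), ((2 * (α : ℚ) - 1) / (2 * (n : ℚ) - 2) + r)

/-- The variable corresponding to the time `T^{α,p}`: the variable `t_{(2n-2)p+2α-1}`
(index `(false, (n-1)p+α-1)`) if `α ≤ n-1`, and `t̂_{2p+1}` (index `(true, p)`) if `α = n`. -/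
def vIdx (n α p : ℕ) : Bool × ℕ :=
  if α = n then (true, p) else (false, (n - 1) * p + α - 1)

/-- The operator `T^{α,p}`: multiplication by the rescaled time variable `c_{α,p}·t`. -/
def Tmul (n α p : ℕ) : PP → PP := fun q => cc n α p • (X (vIdx n α p) * q)

/-- The operator `∂_{α,p} = c_{α,p}⁻¹·∂/∂t`, the derivative in the rescaled time variable. -/
def Dop (n α p : ℕ) : PP → PP := fun q => (cc n α p)⁻¹ • pderiv (vIdx n α p) q

/-- The flat metric: `η_{αβ} = 1/(4n-4)` if `α+β = n`, `η_{nn} = 1/4`, and `0` otherwise. -/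
def eta (n α β : ℕ) : ℚ :=
  if α + β = n then (4 * (n : ℚ) - 4)⁻¹ else if α = n ∧ β = n then (4 : ℚ)⁻¹ else 0

/-- The inverse metric: `η^{αβ} = 4n-4` if `α+β = n`, `η^{nn} = 4`, and `0` otherwise. -/
def etaInv (n α β : ℕ) : ℚ :=
  if α + β = n then 4 * (n : ℚ) - 4 else if α = n ∧ β = n then 4 else 0

open Finset
lemma exists_bound (q : PP) : ∃ N : ℕ, ∀ (b : Bool) (m : ℕ), N ≤ m → pderiv ((b, m) : Bool × ℕ) q = 0 := by
  refine ⟨(q.vars.image Prod.snd).sup id + 1, fun b m hm => ?_⟩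
  apply pderiv_eq_zero_of_notMem_vars
  intro hmem
  have : m ≤ (q.vars.image Prod.snd).sup id :=
    Finset.le_sup (f := id) (Finset.mem_image_of_mem Prod.snd hmem)
  omega

lemma pOp_zero (b : Bool) (k : ℤ) : pOp b k 0 = 0 := by
  unfold pOp; split_ifs <;> simp

lemma pOp_not_odd (b : Bool) {k : ℤ} (h : ¬ Odd k) (q : PP) : pOp b k q = 0 := by
  unfold pOp
  simp only [h, and_false, if_false]

lemma pOp_pos (b : Bool) (m : ℕ) {k : ℤ} (hk : k = 2 * m + 1) (q : PP) :
    pOp b k q = (2 : ℚ) • pderiv ((b, m) : Bool × ℕ) q := by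
  subst hk
  have h1 : (0 : ℤ) < 2 * m + 1 := by positivity
  have h2 : Odd (2 * (m : ℤ) + 1) := ⟨m, by ring⟩
  have h3 : ((2 * (m : ℤ) + 1).toNat - 1) / 2 = m := by omega
  simp [pOp, h1, h2, h3]

lemma pOp_neg (b : Bool) (m : ℕ) {k : ℤ} (hk : k = -(2 * (m : ℤ) + 1)) (q : PP) :
    pOp b k q = ((2 * (m : ℚ) + 1)) • (X ((b, m) : Bool × ℕ) * q) := by
  subst hk
  have h1 : ¬ ((0:ℤ) < -(2 * (m:ℤ) + 1)) := by omega
  have h2 : (-(2 * (m:ℤ) + 1)) < 0 := by omega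
  have h2' : Odd (-(2 * (m : ℤ) + 1)) := ⟨-m - 1, by ring⟩
  have h3 : ((-(-(2 * (m : ℤ) + 1))).toNat - 1) / 2 = m := by omega
  have h4 : ((-(-(2 * (m : ℤ) + 1)) : ℤ) : ℚ) = 2 * (m : ℚ) + 1 := by push_cast; ring
  unfold pOp
  rw [if_neg (by tauto), if_pos ⟨h2, h2'⟩, h3, h4]

lemma nord_not_odd (b : Bool) {a : ℤ} (c : ℤ) (h : ¬ Odd a) (q : PP) : nord b a c q = 0 := by
  unfold nord
  split_ifs
  · show pOp b c (pOp b a q) = 0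
    rw [pOp_not_odd b h q, pOp_zero]
  · show pOp b a (pOp b c q) = 0
    rw [pOp_not_odd b h _]

lemma sum_range_two_mul {M : Type*} [AddCommMonoid M] (T : ℕ) (H : ℕ → M) :
    ∑ r ∈ range (2 * T), H r = ∑ m ∈ range T, (H (2 * m) + H (2 * m + 1)) := by
  induction T with
  | zero => simp
  | succ T ih =>
      have : 2 * (T + 1) = 2 * T + 1 + 1 := by ring
      rw [this, Finset.sum_range_succ, Finset.sum_range_succ, ih, Finset.sum_range_succ, add_assoc]

lemma sum_range_mul_split {M : Type*} [AddCommMonoid M] (d N : ℕ) (h : ℕ → M) :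
    ∑ p ∈ range N, ∑ j ∈ range d, h (d * p + j) = ∑ m ∈ range (d * N), h m := by
  induction N with
  | zero => simp
  | succ N ih =>
      rw [Finset.sum_range_succ, ih]
      have : d * (N + 1) = d * N + d := by ring
      rw [this, Finset.sum_range_add]

lemma V_red (b : Bool) (d N : ℕ) (hd : 1 ≤ d) (q : PP)
    (hN : ∀ m : ℕ, N ≤ m → pderiv ((b, m) : Bool × ℕ) q = 0) :
    ∑ᶠ i : ℤ, nord b i (2 * (d : ℤ) - i) q
    = ∑ m ∈ range N, (4 * (2 * (m : ℚ) + 1)) •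
        (X ((b, m) : Bool × ℕ) * pderiv ((b, m + d) : Bool × ℕ) q)
      + ∑ s ∈ range d, (4 : ℚ) •
        pderiv ((b, s) : Bool × ℕ) (pderiv ((b, d - 1 - s) : Bool × ℕ) q) := by
  set F : ℤ → PP := fun i => nord b i (2 * (d : ℤ) - i) q with hF
  -- vanishing outside a finite window
  have hvan : ∀ i : ℤ, (i < -(2 * ((N : ℤ) + d)) ∨ 2 * (d : ℤ) + 2 * N < i) → F i = 0 := by
    intro i hi
    by_cases hodd : Odd i
    · obtain ⟨c, hc⟩ := hodd
      rcases hi with hi | hi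
      · show nord b i (2 * (d : ℤ) - i) q = 0
        unfold nord
        rw [if_neg (by omega)]
        show pOp b i (pOp b (2 * (d : ℤ) - i) q) = 0
        rw [pOp_pos b ((d : ℤ) - c - 1).toNat (by omega) q,
          hN _ (by omega), smul_zero, pOp_zero]
      · show nord b i (2 * (d : ℤ) - i) q = 0
        unfold nord
        rw [if_pos (⟨by omega, by omega⟩ : 0 < i ∧ 2 * (d : ℤ) - i < 0)]
        show pOp b (2 * (d : ℤ) - i) (pOp b i q) = 0
        rw [pOp_pos b c.toNat (by omega) q, hN _ (by omega), smul_zero, pOp_zero]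
    · exact nord_not_odd b _ hodd q
  set A : Finset ℤ := (range (2 * (N + d))).image (fun r : ℕ => -(r : ℤ) - 1) with hA
  set B : Finset ℤ := (range (2 * d + 1)).image (fun r : ℕ => (r : ℤ)) with hB
  set C : Finset ℤ := (range (2 * N)).image (fun r : ℕ => 2 * (d : ℤ) + 1 + r) with hC
  have hS : Function.support F ⊆ ↑(A ∪ B ∪ C) := by
    intro i hi
    have hi' : F i ≠ 0 := hi
    have hr1 : -(2 * ((N : ℤ) + d)) ≤ i := by
      by_contra h; exact hi' (hvan i (Or.inl (by omega)))
    have hr2 : i ≤ 2 * (d : ℤ) + 2 * N := by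
      by_contra h; exact hi' (hvan i (Or.inr (by omega)))
    simp only [Finset.coe_union, Set.mem_union, hA, hB, hC, Finset.coe_image,
      Set.mem_image, Finset.mem_coe, Finset.mem_range]
    rcases lt_or_ge i 0 with h0 | h0
    · exact Or.inl (Or.inl ⟨(-i - 1).toNat, by omega, by omega⟩)
    · rcases le_or_gt i (2 * (d : ℤ)) with h1 | h1
      · exact Or.inl (Or.inr ⟨i.toNat, by omega, by omega⟩)
      · exact Or.inr ⟨(i - (2 * (d : ℤ) + 1)).toNat, by omega, by omega⟩
  rw [finsum_eq_sum_of_support_subset F hS]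
  have hdisjAB : Disjoint A B := by
    simp only [Finset.disjoint_left, hA, hB, Finset.mem_image, Finset.mem_range]
    rintro x ⟨r, -, rfl⟩ ⟨r', -, h⟩; omega
  have hdisjABC : Disjoint (A ∪ B) C := by
    simp only [Finset.disjoint_left, hA, hB, hC, Finset.mem_union, Finset.mem_image,
      Finset.mem_range]
    rintro x (⟨r, hr, rfl⟩ | ⟨r, hr, rfl⟩) ⟨r', -, h⟩ <;> omega
  rw [Finset.sum_union hdisjABC, Finset.sum_union hdisjAB]
  rw [Finset.sum_image (by intro x _ y _ h; beta_reduce at h; omega),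
    Finset.sum_image (by intro x _ y _ h; beta_reduce at h; omega),
    Finset.sum_image (by intro x _ y _ h; beta_reduce at h; omega)]
  -- the three pieces
  have hSA : ∑ r ∈ range (2 * (N + d)), F (-(r : ℤ) - 1)
      = ∑ m ∈ range N, (2 * (2 * (m : ℚ) + 1)) •
          (X ((b, m) : Bool × ℕ) * pderiv ((b, m + d) : Bool × ℕ) q) := by
    rw [sum_range_two_mul]
    have hterm : ∀ m : ℕ, F (-((2 * m : ℕ) : ℤ) - 1) + F (-((2 * m + 1 : ℕ) : ℤ) - 1)
        = (2 * (2 * (m : ℚ) + 1)) •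
          (X ((b, m) : Bool × ℕ) * pderiv ((b, m + d) : Bool × ℕ) q) := by
      intro m
      have h2 : F (-((2 * m + 1 : ℕ) : ℤ) - 1) = 0 := by
        apply nord_not_odd
        rintro ⟨c, hc⟩; omega
      rw [h2, add_zero]
      show nord b (-((2 * m : ℕ) : ℤ) - 1) (2 * (d : ℤ) - (-((2 * m : ℕ) : ℤ) - 1)) q = _
      unfold nord
      rw [if_neg (by push_cast; omega)]
      show pOp b _ (pOp b _ q) = _
      rw [pOp_pos b (m + d) (by push_cast; ring) q,
        pOp_neg b m (by push_cast; ring) _]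
      rw [mul_smul_comm, smul_smul]
      congr 1
      push_cast; ring
    calc ∑ m ∈ range (N + d), (F (-((2 * m : ℕ) : ℤ) - 1) + F (-((2 * m + 1 : ℕ) : ℤ) - 1))
        = ∑ m ∈ range (N + d), (2 * (2 * (m : ℚ) + 1)) •
            (X ((b, m) : Bool × ℕ) * pderiv ((b, m + d) : Bool × ℕ) q) :=
          Finset.sum_congr rfl fun m _ => hterm m
      _ = _ := by
          refine (Finset.sum_subset (Finset.range_subset_range.mpr (Nat.le_add_right N d)) ?_).symm
          intro m _ hm
          rw [Finset.mem_range, not_lt] at hm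
          rw [hN (m + d) (by omega), mul_comm (X _), MulZeroClass.zero_mul, smul_zero]
  have hSC : ∑ r ∈ range (2 * N), F (2 * (d : ℤ) + 1 + (r : ℕ))
      = ∑ m ∈ range N, (2 * (2 * (m : ℚ) + 1)) •
          (X ((b, m) : Bool × ℕ) * pderiv ((b, m + d) : Bool × ℕ) q) := by
    rw [sum_range_two_mul]
    apply Finset.sum_congr rfl
    intro m _
    have h2 : F (2 * (d : ℤ) + 1 + ((2 * m + 1 : ℕ) : ℤ)) = 0 := by
      apply nord_not_odd
      rintro ⟨c, hc⟩; push_cast at hc; omega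
    rw [h2, add_zero]
    show nord b (2 * (d : ℤ) + 1 + ((2 * m : ℕ) : ℤ)) (2 * (d : ℤ) - (2 * (d : ℤ) + 1 + ((2 * m : ℕ) : ℤ))) q = _
    unfold nord
    rw [if_pos (⟨by push_cast; omega, by push_cast; omega⟩ : _ ∧ _)]
    show pOp b _ (pOp b _ q) = _
    rw [pOp_pos b (m + d) (by push_cast; ring) q,
      pOp_neg b m (by push_cast; ring) _]
    rw [mul_smul_comm, smul_smul]
    congr 1
    push_cast; ring
  have hSB : ∑ r ∈ range (2 * d + 1), F ((r : ℕ) : ℤ)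
      = ∑ s ∈ range d, (4 : ℚ) •
          pderiv ((b, s) : Bool × ℕ) (pderiv ((b, d - 1 - s) : Bool × ℕ) q) := by
    rw [Finset.sum_range_succ, sum_range_two_mul]
    have hlast : F ((2 * d : ℕ) : ℤ) = 0 := by
      apply nord_not_odd
      rintro ⟨c, hc⟩; push_cast at hc; omega
    rw [hlast, add_zero]
    apply Finset.sum_congr rfl
    intro s hs
    rw [Finset.mem_range] at hs
    have h0 : F ((2 * s : ℕ) : ℤ) = 0 := by
      apply nord_not_odd
      rintro ⟨c, hc⟩; push_cast at hc; omega
    rw [h0, zero_add]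
    show nord b ((2 * s + 1 : ℕ) : ℤ) (2 * (d : ℤ) - ((2 * s + 1 : ℕ) : ℤ)) q = _
    unfold nord
    rw [if_neg (by push_cast; omega)]
    show pOp b _ (pOp b _ q) = _
    have hcast : ((d - 1 - s : ℕ) : ℤ) = (d : ℤ) - 1 - s := by omega
    rw [pOp_pos b (d - 1 - s) (by rw [hcast]; push_cast; ring) q,
      pOp_pos b s (by push_cast; ring) _]
    rw [Derivation.map_smul, smul_smul]
    norm_num
  rw [hSA, hSB, hSC, add_right_comm, ← Finset.sum_add_distrib]
  congr 1
  apply Finset.sum_congr rfl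
  intro m _
  rw [← add_smul]
  congr 1
  ring

lemma sum_Icc_one {M : Type*} [AddCommMonoid M] (K : ℕ) (f : ℕ → M) :
    ∑ α ∈ Icc 1 K, f α = ∑ j ∈ range K, f (j + 1) := by
  have h : Icc 1 K = (range K).image (fun j => j + 1) := by
    ext x
    simp only [Finset.mem_Icc, Finset.mem_image, Finset.mem_range]
    constructor
    · rintro ⟨h1, h2⟩; exact ⟨x - 1, by omega, by omega⟩
    · rintro ⟨j, hj, rfl⟩; omega
  rw [h, Finset.sum_image (by intro x _ y _ h; beta_reduce at h; omega)]

lemma cc_n_pos (n p : ℕ) : 0 < cc n n p := by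
  unfold cc
  rw [if_pos rfl]
  positivity

lemma cc_n_succ (n p : ℕ) : cc n n (p + 1) = cc n n p * ((p : ℚ) + 3 / 2) := by
  unfold cc
  rw [if_pos rfl, if_pos rfl, Finset.prod_range_succ]
  push_cast
  ring

lemma cc_lt_pos {n α : ℕ} (hn : 3 ≤ n) (hα1 : 1 ≤ α) (p : ℕ) (hα : α ≠ n) : 0 < cc n α p := by
  unfold cc
  rw [if_neg hα]
  have h1 : (0:ℚ) < 2 * (n : ℚ) - 2 := by
    have : (3:ℚ) ≤ n := by exact_mod_cast hn
    linarith
  have h2 : (0:ℚ) < 2 * (α : ℚ) - 1 := by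
    have : (1:ℚ) ≤ α := by exact_mod_cast hα1
    linarith
  apply mul_pos h1
  apply Finset.prod_pos
  intro r _
  positivity

lemma cc_lt_succ {n α : ℕ} (hα : α ≠ n) (p : ℕ) :
    cc n α (p + 1) = cc n α p * ((2 * (α : ℚ) - 1) / (2 * (n : ℚ) - 2) + ((p : ℚ) + 1)) := by
  unfold cc
  rw [if_neg hα, if_neg hα, Finset.prod_range_succ]
  push_cast
  ring

/-- the `α = n` part of the first sum -/
lemma Ln_part (n N : ℕ) (q : PP) (hn : 3 ≤ n)
    (hN : ∀ m : ℕ, N ≤ m → pderiv ((true, m) : Bool × ℕ) q = 0) :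
    ∑ᶠ p : ℕ, (((p : ℚ) + 1 / 2 + mu n n) * ((p : ℚ) + 3 / 2 + mu n n)) •
        Tmul n n p (Dop n n (p + 1) q)
    = ∑ p ∈ range N, ((2 * (p : ℚ) + 1) / 2) •
        (X ((true, p) : Bool × ℕ) * pderiv ((true, p + 1) : Bool × ℕ) q) := by
  have hpt : ∀ p : ℕ, (((p : ℚ) + 1 / 2 + mu n n) * ((p : ℚ) + 3 / 2 + mu n n)) •
        Tmul n n p (Dop n n (p + 1) q)
      = ((2 * (p : ℚ) + 1) / 2) •
        (X ((true, p) : Bool × ℕ) * pderiv ((true, p + 1) : Bool × ℕ) q) := by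
    intro p
    have hmu : mu n n = 0 := by simp [mu]
    have hv1 : vIdx n n p = (true, p) := by simp [vIdx]
    have hv2 : vIdx n n (p + 1) = (true, p + 1) := by simp [vIdx]
    unfold Tmul Dop
    rw [hmu, hv1, hv2, mul_smul_comm, smul_smul, smul_smul]
    congr 1
    rw [cc_n_succ]
    have h1 : cc n n p ≠ 0 := ne_of_gt (cc_n_pos n p)
    have h2 : (p : ℚ) + 3 / 2 ≠ 0 := by positivity
    field_simp
    ring
  rw [finsum_congr hpt]
  apply finsum_eq_sum_of_support_subset
  intro p hp
  simp only [Function.mem_support] at hp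
  by_contra hmem
  simp only [Finset.coe_range, Set.mem_Iio, not_lt] at hmem
  rw [hN (p + 1) (by omega)] at hp
  simp at hp

/-- the `α ≤ n-1` part of the first sum -/
lemma Lj_part (n N : ℕ) (q : PP) (hn : 3 ≤ n)
    (hN : ∀ m : ℕ, N ≤ m → pderiv ((false, m) : Bool × ℕ) q = 0) :
    ∑ α ∈ Icc 1 (n - 1), ∑ᶠ p : ℕ, (((p : ℚ) + 1 / 2 + mu n α) * ((p : ℚ) + 3 / 2 + mu n α)) •
        Tmul n α p (Dop n α (p + 1) q)
    = ∑ m ∈ range N, ((2 * (m : ℚ) + 1) / (2 * (n : ℚ) - 2)) •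
        (X ((false, m) : Bool × ℕ) * pderiv ((false, m + (n - 1)) : Bool × ℕ) q) := by
  have hc2 : ((n - 1 : ℕ) : ℚ) = (n : ℚ) - 1 := by
    have : 1 ≤ n := by omega
    push_cast [this]; ring
  have hne2 : (2 * (n : ℚ) - 2) ≠ 0 := by
    have : (3:ℚ) ≤ n := by exact_mod_cast hn
    intro h; nlinarith
  set h : ℕ → PP := fun m => ((2 * (m : ℚ) + 1) / (2 * (n : ℚ) - 2)) •
        (X ((false, m) : Bool × ℕ) * pderiv ((false, m + (n - 1)) : Bool × ℕ) q) with hh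
  rw [sum_Icc_one]
  have hpt : ∀ j < n - 1, ∀ p : ℕ,
      (((p : ℚ) + 1 / 2 + mu n (j+1)) * ((p : ℚ) + 3 / 2 + mu n (j+1))) •
        Tmul n (j+1) p (Dop n (j+1) (p + 1) q) = h ((n-1) * p + j) := by
    intro j hj p
    have hne : j + 1 ≠ n := by omega
    have hv1 : vIdx n (j+1) p = (false, (n-1) * p + j) := by
      unfold vIdx
      rw [if_neg hne]
      exact congrArg (Prod.mk false) (by omega)
    have hv2 : vIdx n (j+1) (p+1) = (false, (n-1) * p + j + (n-1)) := by
      unfold vIdx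
      rw [if_neg hne]
      refine congrArg (Prod.mk false) ?_
      rw [Nat.mul_succ]
      omega
    have hmu : mu n (j+1) = (2 * ((j:ℚ)+1) - n) / (2 * (n : ℚ) - 2) := by
      simp only [mu, if_neg hne]
      push_cast
      ring
    rw [hh]
    unfold Tmul Dop
    rw [hv1, hv2, hmu, mul_smul_comm, smul_smul, smul_smul]
    congr 1
    have h1 : cc n (j+1) p ≠ 0 := ne_of_gt (cc_lt_pos hn (by omega) p hne)
    have h3 : (3:ℚ) ≤ n := by exact_mod_cast hn
    have hj0 : (0:ℚ) ≤ j := Nat.cast_nonneg j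
    have hp0 : (0:ℚ) ≤ p := Nat.cast_nonneg p
    have h2 : (2 * ((j:ℚ)+1) - 1) / (2 * (n : ℚ) - 2) + ((p : ℚ) + 1) ≠ 0 := by
      have hq : (0:ℚ) < (2 * ((j:ℚ)+1) - 1) / (2 * (n : ℚ) - 2) := by
        apply div_pos <;> linarith
      linarith
    rw [cc_lt_succ hne, mul_inv, ← mul_assoc, mul_inv_cancel_right₀ h1]
    push_cast [hc2]
    have hA2 : (p:ℚ) + 3/2 + (2*((j:ℚ)+1) - n)/(2*(n:ℚ)-2) = (2*((j:ℚ)+1)-1)/(2*(n:ℚ)-2) + ((p:ℚ)+1) := by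
      rw [add_div' _ _ _ hne2, div_add' _ _ _ hne2, div_eq_div_iff hne2 hne2]
      ring
    rw [mul_assoc, hA2, mul_inv_cancel₀ h2, mul_one]
    have hne1 : (n:ℚ) - 1 ≠ 0 := by intro h; linarith
    field_simp
    ring
  have hfin : ∀ j < n - 1, (∑ᶠ p : ℕ, (((p : ℚ) + 1 / 2 + mu n (j+1)) * ((p : ℚ) + 3 / 2 + mu n (j+1))) •
        Tmul n (j+1) p (Dop n (j+1) (p + 1) q)) = ∑ p ∈ range N, h ((n-1) * p + j) := by
    intro j hj
    rw [finsum_congr (fun p => hpt j hj p)]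
    apply finsum_eq_sum_of_support_subset
    intro p hp
    simp only [Function.mem_support] at hp
    by_contra hmem
    simp only [Finset.coe_range, Set.mem_Iio, not_lt] at hmem
    apply hp
    have hle : p ≤ (n-1) * p := Nat.le_mul_of_pos_left p (by omega)
    simp only [hh]
    rw [hN ((n-1) * p + j + (n-1)) (by omega)]
    simp
  calc ∑ j ∈ range (n-1), ∑ᶠ p : ℕ, (((p : ℚ) + 1 / 2 + mu n (j+1)) * ((p : ℚ) + 3 / 2 + mu n (j+1))) •
        Tmul n (j+1) p (Dop n (j+1) (p + 1) q)
      = ∑ j ∈ range (n-1), ∑ p ∈ range N, h ((n-1) * p + j) := by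
        apply Finset.sum_congr rfl
        intro j hj
        exact hfin j (Finset.mem_range.mp hj)
    _ = ∑ p ∈ range N, ∑ j ∈ range (n-1), h ((n-1) * p + j) := Finset.sum_comm
    _ = ∑ m ∈ range ((n-1) * N), h m := by
        rw [← sum_range_mul_split]
    _ = ∑ m ∈ range N, h m := by
        refine (Finset.sum_subset (Finset.range_subset_range.mpr ?_) ?_).symm
        · exact Nat.le_mul_of_pos_left N (show 0 < n-1 by omega)
        · intro m _ hm
          rw [Finset.mem_range, not_lt] at hm
          simp only [hh]
          rw [hN (m + (n-1)) (by omega)]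
          simp

lemma Icc_split {M : Type*} [AddCommMonoid M] (n : ℕ) (hn : 1 ≤ n) (f : ℕ → M) :
    ∑ α ∈ Icc 1 n, f α = ∑ α ∈ Icc 1 (n-1), f α + f n := by
  have h : n - 1 + 1 = n := by omega
  calc ∑ α ∈ Icc 1 n, f α = ∑ α ∈ Icc 1 (n-1+1), f α := by rw [h]
    _ = ∑ α ∈ Icc 1 (n-1), f α + f (n-1+1) := Finset.sum_Icc_succ_top (by omega) f
    _ = _ := by rw [h]

lemma eta_part (n : ℕ) (hn : 3 ≤ n) (q : PP) :
    ∑ α ∈ Icc 1 n, ∑ β ∈ Icc 1 n,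
        (etaInv n α β * (1 / 2 + mu n α) * (1 / 2 + mu n β)) • Dop n α 0 (Dop n β 0 q)
    = ∑ s ∈ range (n-1), (2 / (2 * (n:ℚ) - 2)) •
        pderiv ((false, s) : Bool × ℕ) (pderiv ((false, n-1-1-s) : Bool × ℕ) q)
      + pderiv ((true, 0) : Bool × ℕ) (pderiv ((true, 0) : Bool × ℕ) q) := by
  have hn1 : (3:ℚ) ≤ n := by exact_mod_cast hn
  have hne2 : 2 * (n:ℚ) - 2 ≠ 0 := by intro h; nlinarith
  have hne1 : (n:ℚ) - 1 ≠ 0 := by intro h; nlinarith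
  have hccn0 : cc n n 0 = 1 := by
    simp [cc, Finset.prod_range_one]
  rw [Icc_split n (by omega)]
  congr 1
  · -- α ≤ n-1 part
    rw [sum_Icc_one]
    apply Finset.sum_congr rfl
    intro j hj
    rw [Finset.mem_range] at hj
    have hne : j + 1 ≠ n := by omega
    set k := n - (j+1) with hk
    have hk1 : 1 ≤ k := by omega
    have hkn : k ≠ n := by omega
    have hkc : (k : ℚ) = (n:ℚ) - j - 1 := by
      rw [hk]
      have h1 : j + 1 ≤ n := by omega
      push_cast [h1]
      ring
    rw [Finset.sum_eq_single k]
    · -- the main term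
      have hEta : etaInv n (j+1) k = 4 * (n:ℚ) - 4 := by
        unfold etaInv
        rw [if_pos (by omega)]
      have hmu1 : mu n (j+1) = (2 * ((j:ℚ)+1) - n) / (2 * (n : ℚ) - 2) := by
        simp only [mu, if_neg hne]
        push_cast
        ring
      have hmu2 : mu n k = (2 * (k:ℚ) - n) / (2 * (n : ℚ) - 2) := by
        simp only [mu, if_neg hkn]
      have hv1 : vIdx n (j+1) 0 = (false, j) := by
        unfold vIdx
        rw [if_neg hne]
        exact congrArg (Prod.mk false) (by omega)
      have hv2 : vIdx n k 0 = (false, n-1-1-j) := by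
        unfold vIdx
        rw [if_neg hkn]
        exact congrArg (Prod.mk false) (by omega)
      have hcc1 : cc n (j+1) 0 = 2 * ((j:ℚ)+1) - 1 := by
        unfold cc
        rw [if_neg hne, Finset.prod_range_one]
        push_cast
        field_simp; ring
      have hcc2 : cc n k 0 = 2 * (k:ℚ) - 1 := by
        unfold cc
        rw [if_neg hkn, Finset.prod_range_one]
        push_cast
        field_simp; ring
      unfold Dop
      rw [hv1, hv2, hcc1, hcc2, hEta, hmu1, hmu2, Derivation.map_smul, smul_smul, smul_smul]
      congr 1
      rw [hkc]
      have hz1 : 2 * ((j:ℚ)+1) - 1 ≠ 0 := by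
        have : (0:ℚ) ≤ j := Nat.cast_nonneg j
        intro h; nlinarith
      have hz2 : 2 * ((n:ℚ) - j - 1) - 1 ≠ 0 := by
        have hjq : (j:ℚ) ≤ (n:ℚ) - 2 := by
          have h1 : (j:ℚ) ≤ ((n-1-1 : ℕ):ℚ) := by
            exact_mod_cast Nat.le_of_lt_succ (by omega)
          have hcast : ((n-1-1:ℕ):ℚ) = (n:ℚ) - 2 := by
            have h2n : 2 ≤ n := by omega
            push_cast [show (1:ℕ) ≤ n - 1 by omega, show (1:ℕ) ≤ n by omega]
            ring
          linarith [hcast ▸ h1]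
        intro h; nlinarith
      field_simp
      ring
    · -- other β vanish
      intro β hβ hβne
      have h0 : etaInv n (j+1) β = 0 := by
        unfold etaInv
        rw [Finset.mem_Icc] at hβ
        rw [if_neg (by omega), if_neg (by omega)]
      rw [h0, MulZeroClass.zero_mul, MulZeroClass.zero_mul, zero_smul]
    · intro hns
      exact absurd (Finset.mem_Icc.mpr ⟨by omega, by omega⟩) hns
  · -- α = n part
    rw [Finset.sum_eq_single n]
    · have hEta : etaInv n n n = 4 := by
        unfold etaInv
        rw [if_neg (by omega), if_pos ⟨rfl, rfl⟩]
      have hmu : mu n n = 0 := by simp [mu]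
      have hv : vIdx n n 0 = (true, 0) := by simp [vIdx]
      unfold Dop
      rw [hv, hccn0, hEta, hmu]
      norm_num
    · intro β hβ hβne
      have h0 : etaInv n n β = 0 := by
        unfold etaInv
        rw [Finset.mem_Icc] at hβ
        rw [if_neg (by omega), if_neg (by tauto)]
      rw [h0, MulZeroClass.zero_mul, MulZeroClass.zero_mul, zero_smul]
    · intro hns
      exact absurd (Finset.mem_Icc.mpr ⟨by omega, by omega⟩) hns


/-- the Virasoro operator
`L_1 = Σ_α Σ_{p≥0} (p+1/2+μ_α)(p+3/2+μ_α)·T^{α,p}∘∂_{α,p+1}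
+ (1/2)·Σ_{α,β} η^{αβ}·(1/2+μ_α)(1/2+μ_β)·∂_{α,0}∘∂_{β,0}`
of the Frobenius manifold of the Coxeter group `D_n` equals `V_1`. -/
theorem L_one_eq_V_one (n : ℕ) (hn : 3 ≤ n) (q : PP) :
    (∑ α ∈ Finset.Icc 1 n, ∑ᶠ p : ℕ,
        (((p : ℚ) + 1 / 2 + mu n α) * ((p : ℚ) + 3 / 2 + mu n α)) •
          Tmul n α p (Dop n α (p + 1) q))
      + (1 / 2 : ℚ) • ∑ α ∈ Finset.Icc 1 n, ∑ β ∈ Finset.Icc 1 n,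
          (etaInv n α β * (1 / 2 + mu n α) * (1 / 2 + mu n β)) •
            Dop n α 0 (Dop n β 0 q)
      = Vop n 1 q := by
  obtain ⟨N, hN⟩ := exists_bound q
  have hn1 : (3:ℚ) ≤ n := by exact_mod_cast hn
  have hne2 : 2 * (n:ℚ) - 2 ≠ 0 := by intro h; nlinarith
  have hne8 : 8 * (n:ℚ) - 8 ≠ 0 := by intro h; nlinarith
  have hne1 : (n:ℚ) - 1 ≠ 0 := by intro h; nlinarith
  rw [Icc_split n (by omega), Lj_part n N q hn (hN false), Ln_part n N q hn (hN true),
    eta_part n hn q]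
  unfold Vop
  rw [if_neg one_ne_zero, zero_smul, add_zero]
  have e1 : ∑ᶠ i : ℤ, nord false i ((2 * (n:ℤ) - 2) * 1 - i) q
      = ∑ m ∈ range N, (4 * (2 * (m : ℚ) + 1)) •
          (X ((false, m) : Bool × ℕ) * pderiv ((false, m + (n-1)) : Bool × ℕ) q)
        + ∑ s ∈ range (n-1), (4 : ℚ) •
          pderiv ((false, s) : Bool × ℕ) (pderiv ((false, n-1-1-s) : Bool × ℕ) q) := by
    have harg : ∀ i : ℤ, (2 * (n:ℤ) - 2) * 1 - i = 2 * ((n-1 : ℕ) : ℤ) - i := by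
      intro i
      have hc : ((n-1 : ℕ) : ℤ) = (n:ℤ) - 1 := by omega
      rw [hc]; ring
    rw [finsum_congr (fun i => by rw [harg i])]
    exact V_red false (n-1) N (by omega) q (hN false)
  have e2 : ∑ᶠ i : ℤ, nord true i (2 * 1 - i) q
      = ∑ p ∈ range N, (4 * (2 * (p : ℚ) + 1)) •
          (X ((true, p) : Bool × ℕ) * pderiv ((true, p + 1) : Bool × ℕ) q)
        + (4 : ℚ) • pderiv ((true, 0) : Bool × ℕ) (pderiv ((true, 0) : Bool × ℕ) q) := by
    have harg : ∀ i : ℤ, 2 * 1 - i = 2 * ((1 : ℕ) : ℤ) - i := by intro i; norm_num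
    rw [finsum_congr (fun i => by rw [harg i])]
    rw [V_red true 1 N le_rfl q (hN true), Finset.sum_range_one]
  rw [e1, e2, smul_add, smul_add, smul_add]
  have hA : (8 * (n:ℚ) - 8)⁻¹ • ∑ m ∈ range N, (4 * (2 * (m : ℚ) + 1)) •
        (X ((false, m) : Bool × ℕ) * pderiv ((false, m + (n-1)) : Bool × ℕ) q)
      = ∑ m ∈ range N, ((2 * (m : ℚ) + 1) / (2 * (n:ℚ) - 2)) •
        (X ((false, m) : Bool × ℕ) * pderiv ((false, m + (n-1)) : Bool × ℕ) q) := by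
    rw [Finset.smul_sum]
    apply Finset.sum_congr rfl
    intro m _
    rw [smul_smul]
    congr 1
    field_simp
    ring
  have hC : (8 * (n:ℚ) - 8)⁻¹ • ∑ s ∈ range (n-1), (4 : ℚ) •
        pderiv ((false, s) : Bool × ℕ) (pderiv ((false, n-1-1-s) : Bool × ℕ) q)
      = (1/2 : ℚ) • ∑ s ∈ range (n-1), (2 / (2 * (n:ℚ) - 2)) •
        pderiv ((false, s) : Bool × ℕ) (pderiv ((false, n-1-1-s) : Bool × ℕ) q) := by
    rw [Finset.smul_sum, Finset.smul_sum]
    apply Finset.sum_congr rfl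
    intro s _
    rw [smul_smul, smul_smul]
    congr 1
    field_simp
    ring
  have hB : (8 : ℚ)⁻¹ • ∑ p ∈ range N, (4 * (2 * (p : ℚ) + 1)) •
        (X ((true, p) : Bool × ℕ) * pderiv ((true, p + 1) : Bool × ℕ) q)
      = ∑ p ∈ range N, ((2 * (p : ℚ) + 1) / 2) •
        (X ((true, p) : Bool × ℕ) * pderiv ((true, p + 1) : Bool × ℕ) q) := by
    rw [Finset.smul_sum]
    apply Finset.sum_congr rfl
    intro p _
    rw [smul_smul]
    congr 1
    norm_num
    ring
  have hD : (8 : ℚ)⁻¹ • ((4 : ℚ) • pderiv ((true, 0) : Bool × ℕ) (pderiv ((true, 0) : Bool × ℕ) q))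
      = (1/2 : ℚ) • pderiv ((true, 0) : Bool × ℕ) (pderiv ((true, 0) : Bool × ℕ) q) := by
    rw [smul_smul]
    norm_num
  rw [hA, hB, hC, hD]
  abel

end
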